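/- For the squared Hinge loss l(r,y) = ((C₀(1−y) + C₁y)/2)·(max{0, 1 − (2y−1)r})² with C₀, C₁ > 0, and d(θ,y) = (1/2)‖θ‖₂² + C·l(⟨x,θ⟩,y), any z ∈ ℝ satisfying z = l₀'(xᵀ(θ − yCxz)) − l₁'(xᵀ(θ + (1−y)Cxz)) belongs to the set {0, (C₀ + C₀xᵀθ)/(1 + C₀yC xᵀx), (C₁ − C₁xᵀθ)/(1 + C₁(1−y)C xᵀx), (C₀ + C₁ + (C₀−C₁)xᵀθ)/(1 + (C₀y + C₁(1−y))C xᵀx)}. -/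

import Mathlib

open Set

/-- for the weighted squared Hinge loss with L2 regularization,
every solution `z` of the fixed-point condition `z = l₀'(xᵀθ̂⁰) − l₁'(xᵀθ̂¹)`
lies in an explicit four-element set. -/
theorem squared_hinge_L2_candidates
    (m : ℕ) (C₀ C₁ : ℝ) (hC₀ : 0 < C₀) (hC₁ : 0 < C₁)
    (x : EuclideanSpace ℝ (Fin m)) (C : ℝ) (hC : 0 < C)
    (θ : EuclideanSpace ℝ (Fin m)) (y : ℝ) (hy : y ∈ Ioo (0:ℝ) 1)
    (z : ℝ)
    (hz : z = C₀ * max 0 (1 + (inner ℝ x (θ - (y * C * z) • x) : ℝ))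
            - (-(C₁ * max 0 (1 - (inner ℝ x (θ + ((1 - y) * C * z) • x) : ℝ))))) :
    z ∈ ({0,
          (C₀ + C₀ * (inner ℝ x θ : ℝ)) / (1 + C₀ * y * C * (inner ℝ x x : ℝ)),
          (C₁ - C₁ * (inner ℝ x θ : ℝ)) / (1 + C₁ * (1 - y) * C * (inner ℝ x x : ℝ)),
          (C₀ + C₁ + (C₀ - C₁) * (inner ℝ x θ : ℝ)) /
            (1 + (C₀ * y + C₁ * (1 - y)) * C * (inner ℝ x x : ℝ))} : Set ℝ) := by
  obtain ⟨hy0, hy1⟩ := hy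
  have hs : (0:ℝ) ≤ (inner ℝ x x : ℝ) := real_inner_self_nonneg
  set a : ℝ := (inner ℝ x θ : ℝ) with ha
  set s : ℝ := (inner ℝ x x : ℝ) with hsdef
  rw [inner_sub_right, inner_add_right, real_inner_smul_right, real_inner_smul_right] at hz
  simp only [← ha, ← hsdef] at hz
  have hd0 : (0:ℝ) < 1 + C₀ * y * C * s := by positivity
  have hd1 : (0:ℝ) < 1 + C₁ * (1 - y) * C * s := by
    have : 0 < 1 - y := by linarith
    positivity
  have hd2 : (0:ℝ) < 1 + (C₀ * y + C₁ * (1 - y)) * C * s := by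
    have h1 : 0 < 1 - y := by linarith
    positivity
  rcases le_total (1 + (a - y * C * z * s)) 0 with h0 | h0 <;>
    rcases le_total (1 - (a + (1 - y) * C * z * s)) 0 with h1 | h1
  · left
    rw [max_eq_left h0, max_eq_left h1] at hz
    linarith [hz]
  · right; right; left
    rw [max_eq_left h0, max_eq_right h1] at hz
    rw [eq_div_iff (ne_of_gt hd1)]
    nlinarith [hz]
  · right; left
    rw [max_eq_right h0, max_eq_left h1] at hz
    rw [eq_div_iff (ne_of_gt hd0)]
    nlinarith [hz]
  · right; right; right
    rw [max_eq_right h0, max_eq_right h1] at hz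
    simp only [mem_singleton_iff]
    rw [eq_div_iff (ne_of_gt hd2)]
    nlinarith [hz]
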